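/- For every well-formed parsing expression grammar G there exists a one-way deterministic pointer pushdown automaton M such that M accepts a word w if and only if w ∈ L(G); that is, every parsing expression language is recognized by some one-way DPPDA. -/

import Mathlib

/-! ### Parsing expression grammars -/

/-- Parsing expressions over nonterminals `N` and input alphabet `A`:
`ε`, terminals, nonterminals, sequence, prioritized choice, not-predicate. -/
inductive PExp (N A : Type) : Type where
  | eps : PExp N A
  | term : A → PExp N A
  | nt : N → PExp N A
  | seq : PExp N A → PExp N A → PExp N A
  | choice : PExp N A → PExp N A → PExp N A
  | not : PExp N A → PExp N A

/-- A parsing expression grammar: one rule per nonterminal, and an axiom. -/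
structure PEG (N A : Type) : Type where
  rule : N → PExp N A
  start : N

/-- Big-step relational semantics of the PEG parsing function `R`:
`Parses G e w r` means `R(e, w) = r`, where `r = none` encodes the failure `F`
and `r = some s` means that `e` consumed a prefix of `w` leaving the suffix `s`.
`R(e, w)` is defined iff `∃ r, Parses G e w r`. -/
inductive Parses {N A : Type} (G : PEG N A) : PExp N A → List A → Option (List A) → Prop where
  | eps (w : List A) : Parses G .eps w (some w)
  | term_ok (a : A) (s : List A) : Parses G (.term a) (a :: s) (some s)
  | term_mismatch {a b : A} (s : List A) (h : a ≠ b) : Parses G (.term a) (b :: s) none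
  | term_nil (a : A) : Parses G (.term a) [] none
  | nt {B : N} {w : List A} {r : Option (List A)} :
      Parses G (G.rule B) w r → Parses G (.nt B) w r
  | seq_ok {e₁ e₂ : PExp N A} {w w' : List A} {r : Option (List A)} :
      Parses G e₁ w (some w') → Parses G e₂ w' r → Parses G (.seq e₁ e₂) w r
  | seq_fail {e₁ e₂ : PExp N A} {w : List A} :
      Parses G e₁ w none → Parses G (.seq e₁ e₂) w none
  | choice_fst {e₁ e₂ : PExp N A} {w w' : List A} :
      Parses G e₁ w (some w') → Parses G (.choice e₁ e₂) w (some w')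
  | choice_snd {e₁ e₂ : PExp N A} {w : List A} {r : Option (List A)} :
      Parses G e₁ w none → Parses G e₂ w r → Parses G (.choice e₁ e₂) w r
  | not_succ {e : PExp N A} {w : List A} :
      Parses G e w none → Parses G (.not e) w (some w)
  | not_fail {e : PExp N A} {w w' : List A} :
      Parses G e w (some w') → Parses G (.not e) w none

/-- The language generated by a PEG: `L(G) = {w | R(S, w) = ε}`. -/
def PEG.Lang {N A : Type} (G : PEG N A) : Set (List A) :=
  {w | Parses G (.nt G.start) w (some [])}

/-- A PEG is complete if `R(S, w)` is defined for every input `w`. -/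
def PEG.Complete {N A : Type} (G : PEG N A) : Prop :=
  ∀ w : List A, ∃ r, Parses G (.nt G.start) w r

/-- Conservative test whether an expression could succeed without consuming input. -/
def PExp.maybeEmpty {N A : Type} : PExp N A → Bool
  | .eps => true
  | .term _ => false
  | .nt _ => true
  | .seq e₁ e₂ => e₁.maybeEmpty && e₂.maybeEmpty
  | .choice e₁ e₂ => e₁.maybeEmpty || e₂.maybeEmpty
  | .not _ => true

/-- The nonterminals that an expression can invoke without first consuming input. -/
def PExp.leftNts {N A : Type} : PExp N A → Set N
  | .eps => ∅
  | .term _ => ∅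
  | .nt B => {B}
  | .seq e₁ e₂ => e₁.leftNts ∪ (if e₁.maybeEmpty then e₂.leftNts else ∅)
  | .choice e₁ e₂ => e₁.leftNts ∪ e₂.leftNts
  | .not e => e.leftNts

/-- A PEG is well-formed if it has no (directly or mutually) left-recursive rules:
no nonterminal can reach an invocation of itself without consuming input. -/
def PEG.WellFormed {N A : Type} (G : PEG N A) : Prop :=
  ∀ B : N, ¬ Relation.TransGen (fun X Y : N => Y ∈ (G.rule X).leftNts) B B

/-! ### Deterministic pointer pushdown automata -/

/-- Tape symbols: the input letters plus the end markers `▷` and `◁`. -/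
inductive TSym (A : Type) : Type where
  | lmark : TSym A
  | rmark : TSym A
  | sym : A → TSym A

/-- The symbol in cell `j` of the tape `▷w◁` (cell `0` holds `▷`, cell `|w|+1` holds `◁`). -/
def tapeNth {A : Type} (w : List A) (j : ℕ) : TSym A :=
  if j = 0 then .lmark
  else
    match w[j - 1]? with
    | some a => .sym a
    | none => .rmark

/-- Head directions: move left, stay, return to the stored pointer, move right. -/
inductive Dir : Type where
  | left | down | up | right
deriving DecidableEq

/-- A (two-way) deterministic pointer pushdown automaton.  A transition
`trans q a Z = some (p, β, d)` pops `(Z, i)` when `β = []` (moving the head by `d`,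
where `d = up` returns the head to the position `i` stored with `Z`), and pushes `β`
above `Z` when `β ≠ []` (moving the head by `d`).  Moves `↑` must pop (`α = ε`),
moving left off `▷` and right off `◁` is forbidden. -/
structure DPPDA (Q A Γ : Type) : Type where
  trans : Q → TSym A → Γ → Option (Q × List Γ × Dir)
  init : Q
  Z0 : Γ
  final : Q → Bool
  up_pop : ∀ q a Z p β, trans q a Z = some (p, β, Dir.up) → β = []
  no_left_lmark : ∀ q Z p β, trans q TSym.lmark Z ≠ some (p, β, Dir.left)
  no_right_rmark : ∀ q Z p β, trans q TSym.rmark Z ≠ some (p, β, Dir.right)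

/-- A configuration: state, stack of symbols tagged with the head position at which
they were pushed (top of the stack is the head of the list), and head position. -/
structure Conf (Q Γ : Type) : Type where
  state : Q
  stack : List (Γ × ℕ)
  pos : ℕ

/-- One move of a DPPDA on input `w` (`none` when no move is possible). -/
def DPPDA.step {Q A Γ : Type} (M : DPPDA Q A Γ) (w : List A) (c : Conf Q Γ) :
    Option (Conf Q Γ) :=
  match c.stack with
  | [] => none
  | (Z, i) :: rest =>
    match M.trans c.state (tapeNth w c.pos) Z with
    | none => none
    | some (p, β, d) =>
      let j' : ℕ :=
        match d with
        | Dir.left => c.pos - 1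
        | Dir.down => c.pos
        | Dir.up => i
        | Dir.right => c.pos + 1
      match β with
      | [] => some ⟨p, rest, j'⟩
      | X :: Xs => some ⟨p, ((X :: Xs).map fun Y => (Y, j')) ++ (Z, i) :: rest, j'⟩

/-- Reachability between configurations. -/
def DPPDA.Reaches {Q A Γ : Type} (M : DPPDA Q A Γ) (w : List A) :
    Conf Q Γ → Conf Q Γ → Prop :=
  Relation.ReflTransGen (fun c c' => M.step w c = some c')

/-- Acceptance: from the initial configuration `(q₀, (Z₀, 0), 0)` the automaton
reaches the right end marker with empty stack in a final state. -/
def DPPDA.Accepts {Q A Γ : Type} (M : DPPDA Q A Γ) (w : List A) : Prop :=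
  ∃ qf : Q, M.final qf = true ∧
    M.Reaches w ⟨M.init, [(M.Z0, 0)], 0⟩ ⟨qf, [], w.length + 1⟩

/-- A one-way DPPDA: moves with direction `←` are forbidden. -/
def DPPDA.OneWay {Q A Γ : Type} (M : DPPDA Q A Γ) : Prop :=
  ∀ q a Z p β, M.trans q a Z ≠ some (p, β, Dir.left)

namespace PegDppda

open PExp

variable {N A : Type}

lemma parses_suffix {G : PEG N A} : ∀ {e : PExp N A} {s : List A} {r : Option (List A)},
    Parses G e s r → ∀ s', r = some s' → s' <:+ s := by
  intro e s r h
  induction h with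
  | eps w => intro s' hs'; cases hs'; exact List.suffix_refl _
  | term_ok a s => intro s' hs'; cases hs'; exact List.suffix_cons a s
  | term_mismatch s h => intro s' hs'; cases hs'
  | term_nil a => intro s' hs'; cases hs'
  | nt _ ih => exact ih
  | seq_ok h1 h2 ih1 ih2 =>
      intro s' hs'
      exact (ih2 s' hs').trans (ih1 _ rfl)
  | seq_fail _ _ => intro s' hs'; cases hs'
  | choice_fst _ ih => intro s' hs'; exact ih s' hs'
  | choice_snd _ _ _ ih2 => exact ih2
  | not_succ _ _ => intro s' hs'; cases hs'; exact List.suffix_refl _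
  | not_fail _ _ => intro s' hs'; cases hs'

lemma maybeEmpty_of_parses_self {G : PEG N A} : ∀ {e : PExp N A} {s : List A} {r : Option (List A)},
    Parses G e s r → r = some s → e.maybeEmpty = true := by
  intro e s r h
  induction h with
  | eps w => intro; rfl
  | term_ok a s => intro hs; exfalso; simp only [Option.some.injEq] at hs; exact List.cons_ne_self a s hs.symm
  | term_mismatch s h => intro hs; cases hs
  | term_nil a => intro hs; cases hs
  | nt _ _ => intro; rfl
  | seq_ok h1 h2 ih1 ih2 =>
      intro hs; cases hs
      -- h1 : e₁ parses s → some w', h2 : e₂ parses w' → some s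
      rename_i s w'
      have hsuf1 : w' <:+ s := parses_suffix h1 _ rfl
      have hsuf2 : s <:+ w' := parses_suffix h2 _ rfl
      have : w' = s := hsuf1.eq_of_length (le_antisymm hsuf1.length_le hsuf2.length_le)
      subst this
      simp [PExp.maybeEmpty, ih1 rfl, ih2 rfl]
  | seq_fail _ _ => intro hs; cases hs
  | choice_fst _ ih => intro hs; cases hs; simp [PExp.maybeEmpty, ih rfl]
  | choice_snd _ _ _ ih2 => intro hs; cases hs; simp [PExp.maybeEmpty, ih2 rfl]
  | not_succ _ _ => intro; rfl
  | not_fail _ _ => intro hs; cases hs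

lemma parses_unique {G : PEG N A} : ∀ {e : PExp N A} {s : List A} {r₁ r₂ : Option (List A)},
    Parses G e s r₁ → Parses G e s r₂ → r₁ = r₂ := by
  intro e s r₁ r₂ h1
  induction h1 generalizing r₂ with
  | eps w => intro h2; cases h2; rfl
  | term_ok a s => intro h2; cases h2 <;> simp_all
  | term_mismatch s h => intro h2; cases h2 <;> simp_all
  | term_nil a => intro h2; cases h2; rfl
  | nt _ ih => intro h2; cases h2; exact ih ‹_›
  | seq_ok h1 h2 ih1 ih2 =>
      intro h3; cases h3 with
      | seq_ok h1' h2' =>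
          have := ih1 h1'; injection this with h; subst h; exact ih2 h2'
      | seq_fail h1' => exact absurd (ih1 h1') (by simp)
  | seq_fail _ ih =>
      intro h3; cases h3 with
      | seq_ok h1' h2' => exact absurd (ih h1') (by simp)
      | seq_fail h1' => rfl
  | choice_fst _ ih =>
      intro h3; cases h3 with
      | choice_fst h' => exact ih h'
      | choice_snd h' _ => exact absurd (ih h') (by simp)
  | choice_snd _ _ ih1 ih2 =>
      intro h3; cases h3 with
      | choice_fst h' => exact absurd (ih1 h') (by simp)
      | choice_snd h' h'' => exact ih2 h''
  | not_succ _ ih =>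
      intro h3; cases h3 with
      | not_succ h' => rfl
      | not_fail h' => exact absurd (ih h') (by simp)
  | not_fail _ ih =>
      intro h3; cases h3 with
      | not_succ h' => exact absurd (ih h') (by simp)
      | not_fail h' => rfl

end PegDppda
namespace PegDppda

variable {N A : Type}

lemma total_aux {G : PEG N A} (s : List A) (e : PExp N A)
    (hleft : ∀ B ∈ e.leftNts, ∃ r, Parses G (.nt B) s r)
    (hshort : ∀ t : List A, t.length < s.length → ∀ e' : PExp N A, ∃ r, Parses G e' t r) :
    ∃ r, Parses G e s r := by
  induction e with
  | eps => exact ⟨some s, .eps s⟩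
  | term a =>
      match s with
      | [] => exact ⟨none, .term_nil a⟩
      | b :: t =>
          by_cases h : a = b
          · subst h; exact ⟨some t, .term_ok a t⟩
          · exact ⟨none, .term_mismatch t h⟩
  | nt B => exact hleft B (by simp [PExp.leftNts])
  | seq e₁ e₂ ih₁ ih₂ =>
      obtain ⟨r₁, hr₁⟩ := ih₁ (fun B hB => hleft B (by simp [PExp.leftNts]; exact Or.inl hB))
      match r₁, hr₁ with
      | none, hr₁ => exact ⟨none, .seq_fail hr₁⟩
      | some s₁, hr₁ =>
          have hsuf : s₁ <:+ s := parses_suffix hr₁ _ rfl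
          rcases lt_or_eq_of_le hsuf.length_le with hlt | heq
          · obtain ⟨r₂, hr₂⟩ := hshort s₁ hlt e₂
            exact ⟨r₂, .seq_ok hr₁ hr₂⟩
          · have hs₁ : s₁ = s := hsuf.eq_of_length heq
            subst hs₁
            have hme : e₁.maybeEmpty = true := maybeEmpty_of_parses_self hr₁ rfl
            obtain ⟨r₂, hr₂⟩ := ih₂ (fun B hB => hleft B (by
              simp [PExp.leftNts, hme]; exact Or.inr hB))
            exact ⟨r₂, .seq_ok hr₁ hr₂⟩
  | choice e₁ e₂ ih₁ ih₂ =>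
      obtain ⟨r₁, hr₁⟩ := ih₁ (fun B hB => hleft B (by simp [PExp.leftNts]; exact Or.inl hB))
      match r₁, hr₁ with
      | some s₁, hr₁ => exact ⟨some s₁, .choice_fst hr₁⟩
      | none, hr₁ =>
          obtain ⟨r₂, hr₂⟩ := ih₂ (fun B hB => hleft B (by simp [PExp.leftNts]; exact Or.inr hB))
          exact ⟨r₂, .choice_snd hr₁ hr₂⟩
  | not e ih =>
      obtain ⟨r, hr⟩ := ih (fun B hB => hleft B (by simpa [PExp.leftNts] using hB))
      match r, hr with
      | some s', hr => exact ⟨none, .not_fail hr⟩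
      | none, hr => exact ⟨some s, .not_succ hr⟩

lemma leftcall_wf [Finite N] {G : PEG N A} (hG : G.WellFormed) :
    WellFounded (fun B' B : N => B' ∈ (G.rule B).leftNts) := by
  have := Fintype.ofFinite N
  have htrans : Transitive (Relation.TransGen (fun B B' : N => B' ∈ (G.rule B).leftNts)) :=
    fun _ _ _ h h' => h.trans h'
  have hirr : Irreflexive (Relation.TransGen (fun B B' : N => B' ∈ (G.rule B).leftNts)) :=
    fun B h => hG B h
  have hwf : WellFounded (flip (Relation.TransGen (fun B B' : N => B' ∈ (G.rule B).leftNts))) := by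
    have : IsTrans N (flip (Relation.TransGen (fun B B' : N => B' ∈ (G.rule B).leftNts))) :=
      ⟨fun a b c h h' => htrans h' h⟩
    have : IsIrrefl N (flip (Relation.TransGen (fun B B' : N => B' ∈ (G.rule B).leftNts))) :=
      ⟨fun a h => hirr a h⟩
    exact Finite.wellFounded_of_trans_of_irrefl _
  exact Subrelation.wf (fun {B' B} h => Relation.TransGen.single h) hwf

lemma total_all [Finite N] {G : PEG N A} (hG : G.WellFormed) :
    ∀ (n : ℕ) (s : List A), s.length = n → ∀ e : PExp N A, ∃ r, Parses G e s r := by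
  intro n
  induction n using Nat.strong_induction_on with
  | _ n ih =>
      intro s hs
      have hshort : ∀ t : List A, t.length < s.length → ∀ e' : PExp N A, ∃ r, Parses G e' t r :=
        fun t ht e' => ih t.length (hs ▸ ht) t rfl e'
      have hnt : ∀ B : N, ∃ r, Parses G (.nt B) s r := by
        intro B
        induction B using (leftcall_wf hG).induction with
        | _ B ihB =>
            obtain ⟨r, hr⟩ := total_aux s (G.rule B) (fun B' hB' => ihB B' hB') hshort
            exact ⟨r, .nt hr⟩
      exact fun e => total_aux s e (fun B _ => hnt B) hshort

end PegDppda
namespace PegDppda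

variable {N A : Type}

/-- All subexpressions of a parsing expression (including itself). -/
def PExp.subs : PExp N A → List (PExp N A)
  | .eps => [.eps]
  | .term a => [.term a]
  | .nt B => [.nt B]
  | .seq e₁ e₂ => .seq e₁ e₂ :: (PExp.subs e₁ ++ PExp.subs e₂)
  | .choice e₁ e₂ => .choice e₁ e₂ :: (PExp.subs e₁ ++ PExp.subs e₂)
  | .not e => .not e :: PExp.subs e

lemma mem_subs_self (e : PExp N A) : e ∈ PExp.subs e := by
  cases e <;> simp [PExp.subs]

lemma subs_subs : ∀ {f e : PExp N A}, e ∈ PExp.subs f → PExp.subs e ⊆ PExp.subs f := by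
  intro f
  induction f with
  | eps => intro e he; simp [PExp.subs] at he; subst he; exact fun _ h => h
  | term a => intro e he; simp [PExp.subs] at he; subst he; exact fun _ h => h
  | nt B => intro e he; simp [PExp.subs] at he; subst he; exact fun _ h => h
  | seq e₁ e₂ ih₁ ih₂ =>
      intro e he
      simp only [PExp.subs, List.mem_cons, List.mem_append] at he
      rcases he with he | he | he
      · subst he; exact fun _ h => h
      · exact fun x hx => List.mem_cons.2 (Or.inr (List.mem_append.2 (Or.inl (ih₁ he hx))))
      · exact fun x hx => List.mem_cons.2 (Or.inr (List.mem_append.2 (Or.inr (ih₂ he hx))))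
  | choice e₁ e₂ ih₁ ih₂ =>
      intro e he
      simp only [PExp.subs, List.mem_cons, List.mem_append] at he
      rcases he with he | he | he
      · subst he; exact fun _ h => h
      · exact fun x hx => List.mem_cons.2 (Or.inr (List.mem_append.2 (Or.inl (ih₁ he hx))))
      · exact fun x hx => List.mem_cons.2 (Or.inr (List.mem_append.2 (Or.inr (ih₂ he hx))))
  | not e₀ ih =>
      intro e he
      simp only [PExp.subs, List.mem_cons] at he
      rcases he with he | he
      · subst he; exact fun _ h => h
      · exact fun x hx => List.mem_cons.2 (Or.inr (ih he hx))

/-- The (finitely many) expressions relevant to grammar `G`. -/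
def Good (G : PEG N A) (e : PExp N A) : Prop :=
  e ∈ PExp.subs (PExp.nt G.start) ∨ ∃ B, e ∈ PExp.subs (G.rule B)

lemma good_of_sub {G : PEG N A} {f e : PExp N A} (hf : Good G f) (he : e ∈ PExp.subs f) :
    Good G e := by
  rcases hf with hf | ⟨B, hf⟩
  · exact Or.inl (subs_subs hf he)
  · exact Or.inr ⟨B, subs_subs hf he⟩

lemma good_rule (G : PEG N A) (B : N) : Good G (G.rule B) := Or.inr ⟨B, mem_subs_self _⟩

lemma good_start (G : PEG N A) : Good G (.nt G.start) := Or.inl (mem_subs_self _)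

lemma good_seq_left {G : PEG N A} {e₁ e₂ : PExp N A} (h : Good G (.seq e₁ e₂)) : Good G e₁ :=
  good_of_sub h (by simp [PExp.subs, mem_subs_self])
lemma good_seq_right {G : PEG N A} {e₁ e₂ : PExp N A} (h : Good G (.seq e₁ e₂)) : Good G e₂ :=
  good_of_sub h (by simp [PExp.subs, mem_subs_self])
lemma good_choice_left {G : PEG N A} {e₁ e₂ : PExp N A} (h : Good G (.choice e₁ e₂)) : Good G e₁ :=
  good_of_sub h (by simp [PExp.subs, mem_subs_self])
lemma good_choice_right {G : PEG N A} {e₁ e₂ : PExp N A} (h : Good G (.choice e₁ e₂)) : Good G e₂ :=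
  good_of_sub h (by simp [PExp.subs, mem_subs_self])
lemma good_not {G : PEG N A} {e : PExp N A} (h : Good G (.not e)) : Good G e :=
  good_of_sub h (by simp [PExp.subs, mem_subs_self])

lemma good_finite [Finite N] (G : PEG N A) : Finite {e : PExp N A // Good G e} := by
  have : {e : PExp N A | Good G e} ⊆
      {e | e ∈ PExp.subs (PExp.nt G.start)} ∪ ⋃ B : N, {e | e ∈ PExp.subs (G.rule B)} := by
    intro e he
    rcases he with he | ⟨B, he⟩
    · exact Or.inl he
    · exact Or.inr (Set.mem_iUnion.2 ⟨B, he⟩)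
  have hfin : Set.Finite ({e : PExp N A | e ∈ PExp.subs (PExp.nt G.start)} ∪
      ⋃ B : N, {e | e ∈ PExp.subs (G.rule B)}) := by
    apply Set.Finite.union (List.finite_toSet _)
    exact Set.finite_iUnion fun B => List.finite_toSet _
  exact (hfin.subset this).to_subtype

/-- Stack frame symbols. -/
inductive Frame (N A : Type) : Type where
  | z0 : Frame N A
  | ev : PExp N A → Frame N A
  | sq : PExp N A → Frame N A
  | al : PExp N A → Frame N A

/-- Good frames. -/
def GoodF (G : PEG N A) : Frame N A → Prop
  | .z0 => True
  | .ev e => Good G e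
  | .sq e => Good G e
  | .al e => Good G e

lemma goodF_finite [Finite N] (G : PEG N A) : Finite {f : Frame N A // GoodF G f} := by
  haveI : Finite {e : PExp N A // Good G e} := good_finite G
  haveI := Fintype.ofFinite {e : PExp N A // Good G e}
  let enc : {f : Frame N A // GoodF G f} → Option ({e : PExp N A // Good G e} × Fin 3) :=
    fun f => match f with
      | ⟨.z0, _⟩ => none
      | ⟨.ev e, h⟩ => some (⟨e, h⟩, 0)
      | ⟨.sq e, h⟩ => some (⟨e, h⟩, 1)
      | ⟨.al e, h⟩ => some (⟨e, h⟩, 2)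
  have hinj : Function.Injective enc := by
    rintro ⟨f₁, h₁⟩ ⟨f₂, h₂⟩ h
    cases f₁ <;> cases f₂ <;> simp_all [enc, Subtype.ext_iff]
  exact Finite.of_injective enc hinj

/-- States of the automaton. -/
inductive MQ : Type where
  | start | run | ok | fail | okS | okA | failA | acc
deriving DecidableEq

instance : Fintype MQ :=
  ⟨{.start, .run, .ok, .fail, .okS, .okA, .failA, .acc}, by intro x; cases x <;> simp⟩

/-- Raw transition function on frames. -/
noncomputable def transF (G : PEG N A) : MQ → TSym A → Frame N A → Option (MQ × List (Frame N A) × Dir) :=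
  open scoped Classical in
  fun q t f =>
  match q, t, f with
  | .start, .lmark, .z0 => some (.run, [.ev (.nt G.start)], .right)
  | .run, t, .ev e =>
      match e with
      | .eps => some (.ok, [], .down)
      | .term a => if t = .sym a then some (.ok, [], .right) else some (.fail, [], .down)
      | .nt B => some (.run, [.ev (G.rule B)], .down)
      | .seq e₁ e₂ => some (.run, [.ev e₁, .sq e₂], .down)
      | .choice e₁ e₂ => some (.run, [.ev e₁, .al e₂], .down)
      | .not e₀ => some (.run, [.ev e₀], .down)
  | .ok, _, .sq _ => some (.okS, [], .down)
  | .okS, _, .ev (.seq _ e₂) => some (.run, [.ev e₂], .down)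
  | .fail, _, .sq _ => some (.fail, [], .down)
  | .ok, _, .al _ => some (.okA, [], .down)
  | .okA, _, .ev (.choice _ _) => some (.ok, [], .down)
  | .fail, _, .al _ => some (.failA, [], .down)
  | .failA, _, .ev (.choice _ e₂) => some (.run, [.ev e₂], .down)
  | .ok, _, .ev (.nt _) => some (.ok, [], .down)
  | .ok, _, .ev (.seq _ _) => some (.ok, [], .down)
  | .ok, _, .ev (.choice _ _) => some (.ok, [], .down)
  | .ok, _, .ev (.not _) => some (.fail, [], .up)
  | .fail, _, .ev (.nt _) => some (.fail, [], .down)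
  | .fail, _, .ev (.seq _ _) => some (.fail, [], .up)
  | .fail, _, .ev (.choice _ _) => some (.fail, [], .up)
  | .fail, _, .ev (.not _) => some (.ok, [], .down)
  | .ok, .rmark, .z0 => some (.acc, [], .down)
  | _, _, _ => none

end PegDppda
namespace PegDppda

variable {N A : Type}

lemma transF_good {G : PEG N A} {q : MQ} {t : TSym A} {f : Frame N A} {p : MQ}
    {β : List (Frame N A)} {d : Dir} (hf : GoodF G f) (h : transF G q t f = some (p, β, d)) :
    ∀ g ∈ β, GoodF G g := by
  cases q <;> cases f <;> cases t <;> (try rename PExp N A => e) <;> (try cases e) <;>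
    simp only [transF] at h <;> (try split at h) <;>
    first
      | (cases h; done)
      | · simp only [Option.some.injEq, Prod.mk.injEq] at h
          obtain ⟨rfl, rfl, rfl⟩ := h
          simp [GoodF]
          all_goals
            first
              | exact ⟨good_seq_left hf, good_seq_right hf⟩
              | exact ⟨good_choice_left hf, good_choice_right hf⟩
              | exact good_not hf
              | exact good_rule G _
              | exact good_seq_right hf
              | exact good_choice_right hf
              | exact good_start G

lemma transF_dir {G : PEG N A} {q : MQ} {t : TSym A} {f : Frame N A} {p : MQ}
    {β : List (Frame N A)} {d : Dir} (h : transF G q t f = some (p, β, d)) :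
    d ≠ .left ∧ (d = .up → β = []) ∧ (t = .rmark → d ≠ .right) := by
  cases q <;> cases f <;> cases t <;> (try rename PExp N A => e) <;> (try cases e) <;>
    simp only [transF] at h <;> (try split at h) <;>
    first
      | (cases h; done)
      | · simp only [Option.some.injEq, Prod.mk.injEq] at h
          obtain ⟨rfl, rfl, rfl⟩ := h
          simp_all

/-- The transition function of the constructed automaton, over good frames. -/
noncomputable def mtrans (G : PEG N A) (q : MQ) (t : TSym A) (Z : {f : Frame N A // GoodF G f}) :
    Option (MQ × List {f : Frame N A // GoodF G f} × Dir) :=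
  match h : transF G q t Z.val with
  | none => none
  | some (p, β, d) => some (p, β.attach.map (fun g => ⟨g.val, transF_good Z.2 h g.val g.2⟩), d)

lemma mtrans_some {G : PEG N A} {q : MQ} {t : TSym A} {Z : {f : Frame N A // GoodF G f}}
    {p : MQ} {β' : List {f : Frame N A // GoodF G f}} {d : Dir}
    (h : mtrans G q t Z = some (p, β', d)) :
    transF G q t Z.val = some (p, β'.map Subtype.val, d) := by
  unfold mtrans at h
  split at h
  · exact absurd h (by simp)
  · rename_i p₀ β₀ d₀ heq
    simp only [Option.some.injEq, Prod.mk.injEq] at h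
    obtain ⟨rfl, h2, rfl⟩ := h
    rw [heq, ← h2]
    simp [List.map_map, Function.comp_def, List.attach_map_subtype_val]

lemma mtrans_none {G : PEG N A} {q : MQ} {t : TSym A} {Z : {f : Frame N A // GoodF G f}}
    (h : transF G q t Z.val = none) : mtrans G q t Z = none := by
  unfold mtrans
  split
  · rfl
  · rename_i heq; rw [h] at heq; exact absurd heq (by simp)

end PegDppda
namespace PegDppda

variable {N A : Type}

/-- The constructed automaton. -/
noncomputable def mach (G : PEG N A) : DPPDA MQ A {f : Frame N A // GoodF G f} where
  trans := mtrans G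
  init := .start
  Z0 := ⟨.z0, trivial⟩
  final q := q = MQ.acc
  up_pop := by
    intro q a Z p β h
    have h' := mtrans_some h
    have h2 := (transF_dir h').2.1 rfl
    exact List.map_eq_nil_iff.mp h2
  no_left_lmark := by
    intro q Z p β h
    exact (transF_dir (mtrans_some h)).1 rfl
  no_right_rmark := by
    intro q Z p β h
    exact (transF_dir (mtrans_some h)).2.2 rfl rfl

lemma mach_trans (G : PEG N A) : (mach G).trans = mtrans G := rfl

lemma mtrans_pop {G : PEG N A} {q : MQ} {t : TSym A} {f : Frame N A} (hf : GoodF G f)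
    {p : MQ} {d : Dir} (h : transF G q t f = some (p, [], d)) :
    mtrans G q t ⟨f, hf⟩ = some (p, [], d) := by
  unfold mtrans
  split
  · rename_i heq; rw [h] at heq; exact nomatch heq
  · rename_i p₀ β₀ d₀ heq
    rw [h] at heq
    simp only [Option.some.injEq, Prod.mk.injEq] at heq
    obtain ⟨rfl, rfl, rfl⟩ := heq
    rfl

lemma mtrans_push1 {G : PEG N A} {q : MQ} {t : TSym A} {f : Frame N A} (hf : GoodF G f)
    {p : MQ} {g : Frame N A} (hg : GoodF G g) {d : Dir}
    (h : transF G q t f = some (p, [g], d)) :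
    mtrans G q t ⟨f, hf⟩ = some (p, [⟨g, hg⟩], d) := by
  unfold mtrans
  split
  · rename_i heq; rw [h] at heq; exact nomatch heq
  · rename_i p₀ β₀ d₀ heq
    rw [h] at heq
    simp only [Option.some.injEq, Prod.mk.injEq] at heq
    obtain ⟨rfl, rfl, rfl⟩ := heq
    rfl

lemma mtrans_push2 {G : PEG N A} {q : MQ} {t : TSym A} {f : Frame N A} (hf : GoodF G f)
    {p : MQ} {g₁ g₂ : Frame N A} (hg₁ : GoodF G g₁) (hg₂ : GoodF G g₂) {d : Dir}
    (h : transF G q t f = some (p, [g₁, g₂], d)) :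
    mtrans G q t ⟨f, hf⟩ = some (p, [⟨g₁, hg₁⟩, ⟨g₂, hg₂⟩], d) := by
  unfold mtrans
  split
  · rename_i heq; rw [h] at heq; exact nomatch heq
  · rename_i p₀ β₀ d₀ heq
    rw [h] at heq
    simp only [Option.some.injEq, Prod.mk.injEq] at heq
    obtain ⟨rfl, rfl, rfl⟩ := heq
    rfl

/-- New head position for a move. -/
def dirPos (d : Dir) (j i : ℕ) : ℕ :=
  match d with
  | .left => j - 1
  | .down => j
  | .up => i
  | .right => j + 1

section generic
variable {Q Γ : Type} {M : DPPDA Q A Γ} {w : List A}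

lemma step_of_trans_pop {q : Q} {Z : Γ} {i j : ℕ} {σ : List (Γ × ℕ)} {p : Q} {d : Dir}
    (h : M.trans q (tapeNth w j) Z = some (p, [], d)) :
    M.step w ⟨q, (Z, i) :: σ, j⟩ = some ⟨p, σ, dirPos d j i⟩ := by
  unfold DPPDA.step
  simp only [h]
  cases d <;> rfl

lemma step_of_trans_push {q : Q} {Z : Γ} {i j : ℕ} {σ : List (Γ × ℕ)} {p : Q}
    {X : Γ} {Xs : List Γ} {d : Dir}
    (h : M.trans q (tapeNth w j) Z = some (p, X :: Xs, d)) :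
    M.step w ⟨q, (Z, i) :: σ, j⟩ =
      some ⟨p, ((X :: Xs).map fun Y => (Y, dirPos d j i)) ++ (Z, i) :: σ, dirPos d j i⟩ := by
  unfold DPPDA.step
  simp only [h]
  cases d <;> rfl

lemma step_of_trans_none {q : Q} {Z : Γ} {i j : ℕ} {σ : List (Γ × ℕ)}
    (h : M.trans q (tapeNth w j) Z = none) :
    M.step w ⟨q, (Z, i) :: σ, j⟩ = none := by
  unfold DPPDA.step
  simp only [h]

lemma step_nil {q : Q} {j : ℕ} : M.step w ⟨q, [], j⟩ = none := rfl

lemma reaches_step {c c' : Conf Q Γ} (h : M.step w c = some c') : M.Reaches w c c' :=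
  Relation.ReflTransGen.single h

lemma reaches_trans {c₁ c₂ c₃ : Conf Q Γ} (h₁ : M.Reaches w c₁ c₂) (h₂ : M.Reaches w c₂ c₃) :
    M.Reaches w c₁ c₃ := Relation.ReflTransGen.trans h₁ h₂

lemma reaches_head {c₁ c₂ c₃ : Conf Q Γ} (h₁ : M.step w c₁ = some c₂) (h₂ : M.Reaches w c₂ c₃) :
    M.Reaches w c₁ c₃ := Relation.ReflTransGen.head h₁ h₂

lemma reaches_det {c a b : Conf Q Γ} (h₁ : M.Reaches w c a) (h₂ : M.Reaches w c b)
    (ha : M.step w a = none) (hb : M.step w b = none) : a = b := by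
  revert h₂
  induction h₁ using Relation.ReflTransGen.head_induction_on with
  | refl =>
      intro h₂
      rcases (Relation.reflTransGen_iff_eq_or_transGen.mp h₂) with rfl | htg
      · rfl
      · obtain ⟨c', hc', _⟩ := Relation.TransGen.head'_iff.mp htg
        rw [ha] at hc'; exact nomatch hc'
  | head hstep _ ih =>
      intro h₂
      rcases (Relation.reflTransGen_iff_eq_or_transGen.mp h₂) with rfl | htg
      · rw [hb] at hstep; exact nomatch hstep
      · obtain ⟨c', hc', hrest⟩ := Relation.TransGen.head'_iff.mp htg
        rw [hstep] at hc'
        injection hc' with hc'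
        subst hc'
        exact ih hrest

end generic

/-- Head position corresponding to a suffix `s` of the input `w`. -/
def posOf (w s : List A) : ℕ := w.length + 1 - s.length

lemma posOf_nil (w : List A) : posOf w [] = w.length + 1 := by simp [posOf]

lemma tape_at_suffix {w s : List A} (h : s <:+ w) :
    tapeNth w (posOf w s) = (match s with | [] => TSym.rmark | a :: _ => TSym.sym a) := by
  obtain ⟨u, rfl⟩ := h
  match s with
  | [] => simp [posOf, tapeNth]
  | a :: t =>
      have hpos : posOf (u ++ a :: t) (a :: t) = u.length + 1 := by
        simp [posOf]; omega
      rw [hpos]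
      simp only [tapeNth]
      rw [if_neg (by omega)]
      have h1 : u.length + 1 - 1 = u.length := rfl
      rw [h1]
      have : (u ++ a :: t)[u.length]? = some a := by
        rw [List.getElem?_append_right (le_refl _)]; simp
      rw [this]

lemma posOf_cons {w : List A} {a : A} {t : List A} (h : (a :: t) <:+ w) :
    posOf w (a :: t) + 1 = posOf w t := by
  have := h.length_le
  simp only [posOf, List.length_cons] at *
  omega

end PegDppda
namespace PegDppda

variable {N A : Type} {G : PEG N A} {t : TSym A}

lemma tf_start : transF G .start .lmark .z0 = some (.run, [.ev (.nt G.start)], .right) := rfl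
lemma tf_run_eps : transF G .run t (.ev .eps) = some (.ok, [], .down) := by cases t <;> rfl
lemma tf_run_term_ok (a : A) :
    transF G .run (.sym a) (.ev (.term a)) = some (.ok, [], .right) := by simp [transF]
lemma tf_run_term_fail (a : A) (h : t ≠ .sym a) :
    transF G .run t (.ev (.term a)) = some (.fail, [], .down) := by
  cases t <;> simp_all [transF]
lemma tf_run_nt (B : N) :
    transF G .run t (.ev (.nt B)) = some (.run, [.ev (G.rule B)], .down) := by cases t <;> rfl
lemma tf_run_seq (e₁ e₂ : PExp N A) :
    transF G .run t (.ev (.seq e₁ e₂)) = some (.run, [.ev e₁, .sq e₂], .down) := by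
  cases t <;> rfl
lemma tf_run_choice (e₁ e₂ : PExp N A) :
    transF G .run t (.ev (.choice e₁ e₂)) = some (.run, [.ev e₁, .al e₂], .down) := by
  cases t <;> rfl
lemma tf_run_not (e : PExp N A) :
    transF G .run t (.ev (.not e)) = some (.run, [.ev e], .down) := by cases t <;> rfl
lemma tf_ok_sq (e : PExp N A) : transF G .ok t (.sq e) = some (.okS, [], .down) := by
  cases t <;> rfl
lemma tf_okS_seq (e₁ e₂ : PExp N A) :
    transF G .okS t (.ev (.seq e₁ e₂)) = some (.run, [.ev e₂], .down) := by cases t <;> rfl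
lemma tf_fail_sq (e : PExp N A) : transF G .fail t (.sq e) = some (.fail, [], .down) := by
  cases t <;> rfl
lemma tf_ok_al (e : PExp N A) : transF G .ok t (.al e) = some (.okA, [], .down) := by
  cases t <;> rfl
lemma tf_okA_choice (e₁ e₂ : PExp N A) :
    transF G .okA t (.ev (.choice e₁ e₂)) = some (.ok, [], .down) := by cases t <;> rfl
lemma tf_fail_al (e : PExp N A) : transF G .fail t (.al e) = some (.failA, [], .down) := by
  cases t <;> rfl
lemma tf_failA_choice (e₁ e₂ : PExp N A) :
    transF G .failA t (.ev (.choice e₁ e₂)) = some (.run, [.ev e₂], .down) := by cases t <;> rfl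
lemma tf_ok_nt (B : N) : transF G .ok t (.ev (.nt B)) = some (.ok, [], .down) := by
  cases t <;> rfl
lemma tf_ok_seq (e₁ e₂ : PExp N A) :
    transF G .ok t (.ev (.seq e₁ e₂)) = some (.ok, [], .down) := by cases t <;> rfl
lemma tf_ok_choice (e₁ e₂ : PExp N A) :
    transF G .ok t (.ev (.choice e₁ e₂)) = some (.ok, [], .down) := by cases t <;> rfl
lemma tf_ok_not (e : PExp N A) : transF G .ok t (.ev (.not e)) = some (.fail, [], .up) := by
  cases t <;> rfl
lemma tf_fail_nt (B : N) : transF G .fail t (.ev (.nt B)) = some (.fail, [], .down) := by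
  cases t <;> rfl
lemma tf_fail_seq (e₁ e₂ : PExp N A) :
    transF G .fail t (.ev (.seq e₁ e₂)) = some (.fail, [], .up) := by cases t <;> rfl
lemma tf_fail_choice (e₁ e₂ : PExp N A) :
    transF G .fail t (.ev (.choice e₁ e₂)) = some (.fail, [], .up) := by cases t <;> rfl
lemma tf_fail_not (e : PExp N A) : transF G .fail t (.ev (.not e)) = some (.ok, [], .down) := by
  cases t <;> rfl
lemma tf_ok_z0_rmark : transF G .ok .rmark .z0 = some (.acc, [], .down) := rfl
lemma tf_ok_z0_sym (a : A) : transF G .ok (.sym a) .z0 = none := rfl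
lemma tf_fail_z0 : transF G .fail t .z0 = none := by cases t <;> rfl

/-- Target configuration after evaluating an expression. -/
def outConf (G : PEG N A) (w s : List A) (r : Option (List A))
    (σ : List ({f : Frame N A // GoodF G f} × ℕ)) : Conf MQ {f : Frame N A // GoodF G f} :=
  match r with
  | some s' => ⟨.ok, σ, posOf w s'⟩
  | none => ⟨.fail, σ, posOf w s⟩

/-- The main simulation lemma. -/
lemma sim {w : List A} :
    ∀ {e : PExp N A} {s : List A} {r : Option (List A)}, Parses G e s r → s <:+ w →
    ∀ (he : GoodF G (.ev e)) (σ : List ({f : Frame N A // GoodF G f} × ℕ)),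
    (mach G).Reaches w ⟨.run, (⟨.ev e, he⟩, posOf w s) :: σ, posOf w s⟩ (outConf G w s r σ) := by
  intro e s r hp
  induction hp with
  | eps s =>
      intro hsuf he σ
      exact reaches_step (step_of_trans_pop
        (by rw [mach_trans]; exact mtrans_pop he tf_run_eps))
  | term_ok a s =>
      intro hsuf he σ
      have hst : (mach G).step w ⟨.run, (⟨.ev (.term a), he⟩, posOf w (a :: s)) :: σ,
          posOf w (a :: s)⟩ = some ⟨.ok, σ, posOf w (a :: s) + 1⟩ :=
        step_of_trans_pop
          (by rw [mach_trans, tape_at_suffix hsuf]; exact mtrans_pop he (tf_run_term_ok a))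
      rw [posOf_cons hsuf] at hst
      exact reaches_step hst
  | term_mismatch s hne =>
      intro hsuf he σ
      rename_i a b
      exact reaches_step (step_of_trans_pop
        (by rw [mach_trans, tape_at_suffix hsuf]
            exact mtrans_pop he (tf_run_term_fail a (by simp; exact fun h => hne h.symm))))
  | term_nil a =>
      intro hsuf he σ
      exact reaches_step (step_of_trans_pop
        (by rw [mach_trans, tape_at_suffix hsuf]
            exact mtrans_pop he (tf_run_term_fail a (by simp))))
  | nt hB ih =>
      intro hsuf he σ
      rename_i B s r
      have hgr : GoodF G (.ev (G.rule B)) := good_rule G B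
      refine reaches_head (step_of_trans_push (X := ⟨.ev (G.rule B), hgr⟩) (Xs := [])
        (by rw [mach_trans]; exact mtrans_push1 he hgr (tf_run_nt B))) ?_
      refine reaches_trans (ih hsuf hgr ((⟨.ev (.nt B), he⟩, posOf w s) :: σ)) ?_
      match r with
      | some s' =>
          simp only [outConf]
          exact reaches_step (step_of_trans_pop
            (by rw [mach_trans]; exact mtrans_pop he (tf_ok_nt B)))
      | none =>
          simp only [outConf]
          exact reaches_step (step_of_trans_pop
            (by rw [mach_trans]; exact mtrans_pop he (tf_fail_nt B)))
  | seq_ok h₁ h₂ ih₁ ih₂ =>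
      intro hsuf he σ
      rename_i e₁ e₂ s s₁ r
      have hg₁ : GoodF G (.ev e₁) := good_seq_left he
      have hg₂ : GoodF G (.sq e₂) := good_seq_right he
      have hg₂' : GoodF G (.ev e₂) := good_seq_right he
      have hsuf₁ : s₁ <:+ w := (parses_suffix h₁ _ rfl).trans hsuf
      refine reaches_head (step_of_trans_push (X := ⟨.ev e₁, hg₁⟩) (Xs := [⟨.sq e₂, hg₂⟩])
        (by rw [mach_trans]; exact mtrans_push2 he hg₁ hg₂ (tf_run_seq e₁ e₂))) ?_
      refine reaches_trans (ih₁ hsuf hg₁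
        ((⟨.sq e₂, hg₂⟩, posOf w s) :: (⟨.ev (.seq e₁ e₂), he⟩, posOf w s) :: σ)) ?_
      refine reaches_head (step_of_trans_pop
        (by rw [mach_trans]; exact mtrans_pop hg₂ (tf_ok_sq e₂))) ?_
      refine reaches_head (step_of_trans_push (X := ⟨.ev e₂, hg₂'⟩) (Xs := [])
        (by rw [mach_trans]; exact mtrans_push1 he hg₂' (tf_okS_seq e₁ e₂))) ?_
      refine reaches_trans (ih₂ hsuf₁ hg₂' ((⟨.ev (.seq e₁ e₂), he⟩, posOf w s) :: σ)) ?_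
      match r with
      | some s₂ =>
          simp only [outConf]
          exact reaches_step (step_of_trans_pop
            (by rw [mach_trans]; exact mtrans_pop he (tf_ok_seq e₁ e₂)))
      | none =>
          simp only [outConf]
          exact reaches_step (step_of_trans_pop
            (by rw [mach_trans]; exact mtrans_pop he (tf_fail_seq e₁ e₂)))
  | seq_fail h₁ ih₁ =>
      intro hsuf he σ
      rename_i e₁ e₂ s
      have hg₁ : GoodF G (.ev e₁) := good_seq_left he
      have hg₂ : GoodF G (.sq e₂) := good_seq_right he
      refine reaches_head (step_of_trans_push (X := ⟨.ev e₁, hg₁⟩) (Xs := [⟨.sq e₂, hg₂⟩])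
        (by rw [mach_trans]; exact mtrans_push2 he hg₁ hg₂ (tf_run_seq e₁ e₂))) ?_
      refine reaches_trans (ih₁ hsuf hg₁
        ((⟨.sq e₂, hg₂⟩, posOf w s) :: (⟨.ev (.seq e₁ e₂), he⟩, posOf w s) :: σ)) ?_
      refine reaches_head (step_of_trans_pop
        (by rw [mach_trans]; exact mtrans_pop hg₂ (tf_fail_sq e₂))) ?_
      exact reaches_step (step_of_trans_pop
        (by rw [mach_trans]; exact mtrans_pop he (tf_fail_seq e₁ e₂)))
  | choice_fst h₁ ih₁ =>
      intro hsuf he σ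
      rename_i e₁ e₂ s s'
      have hg₁ : GoodF G (.ev e₁) := good_choice_left he
      have hg₂ : GoodF G (.al e₂) := good_choice_right he
      refine reaches_head (step_of_trans_push (X := ⟨.ev e₁, hg₁⟩) (Xs := [⟨.al e₂, hg₂⟩])
        (by rw [mach_trans]; exact mtrans_push2 he hg₁ hg₂ (tf_run_choice e₁ e₂))) ?_
      refine reaches_trans (ih₁ hsuf hg₁
        ((⟨.al e₂, hg₂⟩, posOf w s) :: (⟨.ev (.choice e₁ e₂), he⟩, posOf w s) :: σ)) ?_
      refine reaches_head (step_of_trans_pop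
        (by rw [mach_trans]; exact mtrans_pop hg₂ (tf_ok_al e₂))) ?_
      exact reaches_step (step_of_trans_pop
        (by rw [mach_trans]; exact mtrans_pop he (tf_okA_choice e₁ e₂)))
  | choice_snd h₁ h₂ ih₁ ih₂ =>
      intro hsuf he σ
      rename_i e₁ e₂ s r
      have hg₁ : GoodF G (.ev e₁) := good_choice_left he
      have hg₂ : GoodF G (.al e₂) := good_choice_right he
      have hg₂' : GoodF G (.ev e₂) := good_choice_right he
      refine reaches_head (step_of_trans_push (X := ⟨.ev e₁, hg₁⟩) (Xs := [⟨.al e₂, hg₂⟩])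
        (by rw [mach_trans]; exact mtrans_push2 he hg₁ hg₂ (tf_run_choice e₁ e₂))) ?_
      refine reaches_trans (ih₁ hsuf hg₁
        ((⟨.al e₂, hg₂⟩, posOf w s) :: (⟨.ev (.choice e₁ e₂), he⟩, posOf w s) :: σ)) ?_
      refine reaches_head (step_of_trans_pop
        (by rw [mach_trans]; exact mtrans_pop hg₂ (tf_fail_al e₂))) ?_
      refine reaches_head (step_of_trans_push (X := ⟨.ev e₂, hg₂'⟩) (Xs := [])
        (by rw [mach_trans]; exact mtrans_push1 he hg₂' (tf_failA_choice e₁ e₂))) ?_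
      refine reaches_trans (ih₂ hsuf hg₂' ((⟨.ev (.choice e₁ e₂), he⟩, posOf w s) :: σ)) ?_
      match r with
      | some s₂ =>
          simp only [outConf]
          exact reaches_step (step_of_trans_pop
            (by rw [mach_trans]; exact mtrans_pop he (tf_ok_choice e₁ e₂)))
      | none =>
          simp only [outConf]
          exact reaches_step (step_of_trans_pop
            (by rw [mach_trans]; exact mtrans_pop he (tf_fail_choice e₁ e₂)))
  | not_succ h ih =>
      intro hsuf he σ
      rename_i e₀ s
      have hg : GoodF G (.ev e₀) := good_not he
      refine reaches_head (step_of_trans_push (X := ⟨.ev e₀, hg⟩) (Xs := [])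
        (by rw [mach_trans]; exact mtrans_push1 he hg (tf_run_not e₀))) ?_
      refine reaches_trans (ih hsuf hg ((⟨.ev (.not e₀), he⟩, posOf w s) :: σ)) ?_
      simp only [outConf]
      exact reaches_step (step_of_trans_pop
        (by rw [mach_trans]; exact mtrans_pop he (tf_fail_not e₀)))
  | not_fail h ih =>
      intro hsuf he σ
      rename_i e₀ s s'
      have hg : GoodF G (.ev e₀) := good_not he
      refine reaches_head (step_of_trans_push (X := ⟨.ev e₀, hg⟩) (Xs := [])
        (by rw [mach_trans]; exact mtrans_push1 he hg (tf_run_not e₀))) ?_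
      refine reaches_trans (ih hsuf hg ((⟨.ev (.not e₀), he⟩, posOf w s) :: σ)) ?_
      simp only [outConf]
      exact reaches_step (step_of_trans_pop
        (by rw [mach_trans]; exact mtrans_pop he (tf_ok_not e₀)))

end PegDppda
namespace PegDppda

variable {N A : Type}

lemma posOf_self (w : List A) : posOf w w = 1 := by simp [posOf]

lemma tape_zero (w : List A) : tapeNth w 0 = .lmark := rfl

lemma mach_final_iff (G : PEG N A) (q : MQ) : (mach G).final q = true ↔ q = .acc := by
  simp [mach]

lemma mach_accept_lang [Finite N] (G : PEG N A) (hG : G.WellFormed) (w : List A) :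
    (mach G).Accepts w ↔ w ∈ G.Lang := by
  have hstep0 : (mach G).step w ⟨(mach G).init, [((mach G).Z0, 0)], 0⟩ =
      some ⟨.run, [(⟨.ev (.nt G.start), good_start G⟩, 1), (⟨.z0, trivial⟩, 0)], 1⟩ := by
    have h := step_of_trans_push (M := mach G) (w := w) (q := .start) (Z := ⟨.z0, trivial⟩)
      (i := 0) (j := 0) (σ := []) (p := .run) (X := ⟨.ev (.nt G.start), good_start G⟩) (Xs := [])
      (d := .right)
      (by rw [mach_trans, tape_zero]; exact mtrans_push1 (show GoodF G .z0 from trivial) (show GoodF G (.ev (.nt G.start)) from good_start G) tf_start)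
    exact h
  constructor
  · rintro ⟨qf, hqf, hreach⟩
    obtain ⟨r, hr⟩ := total_all hG w.length w rfl (.nt G.start)
    have hsim := sim (w := w) hr (List.suffix_refl w) (good_start G) [(⟨.z0, trivial⟩, 0)]
    rw [posOf_self] at hsim
    have hreach' : (mach G).Reaches w ⟨(mach G).init, [((mach G).Z0, 0)], 0⟩
        (outConf G w w r [(⟨.z0, trivial⟩, 0)]) := reaches_head hstep0 hsim
    rcases r with _ | s
    · exfalso
      have hstuck : (mach G).step w (outConf G w w none [(⟨.z0, trivial⟩, 0)]) = none := by
        simp only [outConf]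
        exact step_of_trans_none (by rw [mach_trans]; exact mtrans_none tf_fail_z0)
      have heq := reaches_det hreach' hreach hstuck step_nil
      simp [outConf, Conf.mk.injEq] at heq
    · rcases s with _ | ⟨a, t⟩
      · exact hr
      · exfalso
        have hsuf : (a :: t) <:+ w := parses_suffix hr _ rfl
        have hstuck : (mach G).step w (outConf G w w (some (a :: t)) [(⟨.z0, trivial⟩, 0)])
            = none := by
          simp only [outConf]
          exact step_of_trans_none
            (by rw [mach_trans, tape_at_suffix hsuf]; exact mtrans_none (tf_ok_z0_sym a))
        have heq := reaches_det hreach' hreach hstuck step_nil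
        simp [outConf, Conf.mk.injEq] at heq
  · intro hw
    refine ⟨.acc, by simp [mach], ?_⟩
    refine reaches_head hstep0 ?_
    have hsim := sim (w := w) hw (List.suffix_refl w) (good_start G) [(⟨.z0, trivial⟩, 0)]
    rw [posOf_self] at hsim
    refine reaches_trans hsim ?_
    have htape : tapeNth w (posOf w []) = .rmark := tape_at_suffix (List.nil_suffix (l := w))
    have hlast : (mach G).step w ⟨.ok, [(⟨.z0, trivial⟩, 0)], posOf w []⟩ =
        some ⟨.acc, [], posOf w []⟩ :=
      step_of_trans_pop (by rw [mach_trans, htape]; exact mtrans_pop (show GoodF G .z0 from trivial) tf_ok_z0_rmark)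
    simp only [outConf]
    rw [← posOf_nil w]
    exact reaches_step hlast

end PegDppda

open PegDppda in
/-- For every well-formed PEG `G` there is a one-way deterministic
pointer pushdown automaton accepting exactly the words of `L(G)`. -/
theorem peg_to_dppda {N A : Type} [Finite N] [Finite A] (G : PEG N A)
    (hG : G.WellFormed) :
    ∃ (Q Γ : Type) (_ : Finite Q) (_ : Finite Γ) (M : DPPDA Q A Γ),
      M.OneWay ∧ ∀ w : List A, M.Accepts w ↔ w ∈ G.Lang := by
  refine ⟨MQ, {f : Frame N A // GoodF G f}, inferInstance, goodF_finite G, mach G, ?_, ?_⟩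
  · intro q a Z p β h
    exact (transF_dir (mtrans_some h)).1 rfl
  · exact mach_accept_lang G hG
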